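/- Let (R_i, f_i) for i ∈ ℕ be an inverse system of rings where each f_i : R_{i+1} → R_i is surjective and each R_i is unit-regular. Then the inverse limit ring {(x_i) ∈ ∏ R_i : f_i(x_{i+1}) = x_i} is unit-regular. -/
import Mathlib

section Aux
variable {S : Type*} [Ring S] {T : Type*} [Ring T]

/-- Element-wise equivalence of idempotents. -/
def IdemEquiv (p q : S) : Prop := ∃ x y : S, x * y = p ∧ y * x = q ∧ x * q = x ∧ q * y = y

lemma IdemEquiv.symm {p q : S} (h : IdemEquiv p q) : IdemEquiv q p := by
  obtain ⟨x, y, h1, h2, h3, h4⟩ := h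
  refine ⟨y, x, h2, h1, ?_, ?_⟩
  · linear_combination (norm := noncomm_ring) - y * h1 + h2 * y + h4
  · linear_combination (norm := noncomm_ring) - h1 * x + x * h2 + h3

lemma IdemEquiv.trans {p q r : S} (h : IdemEquiv p q) (h' : IdemEquiv q r) :
    IdemEquiv p r := by
  obtain ⟨x1, y1, a1, a2, a3, a4⟩ := h
  obtain ⟨x2, y2, b1, b2, b3, b4⟩ := h'
  have b5 : q * x2 = x2 := by
    linear_combination (norm := noncomm_ring) - b1 * x2 + x2 * b2 + b3
  refine ⟨x1 * x2, y2 * y1, ?_, ?_, ?_, ?_⟩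
  · linear_combination (norm := noncomm_ring) x1 * b1 * y1 + x1 * a4 + a1
  · linear_combination (norm := noncomm_ring) y2 * a2 * x2 + y2 * b5 + b2
  · linear_combination (norm := noncomm_ring) x1 * b3
  · linear_combination (norm := noncomm_ring) b4 * y1

/-- Complements of conjugate idempotents are equivalent. -/
lemma conj_compl_equiv (e w w' : S) (he : e * e = e) (hww' : w * w' = 1)
    (hw'w : w' * w = 1) : IdemEquiv (1 - e) (1 - w * e * w') := by
  refine ⟨(1 - e) * w', w * (1 - e), ?_, ?_, ?_, ?_⟩
  · linear_combination (norm := noncomm_ring) (1 - e) * hw'w * (1 - e) + he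
  · linear_combination (norm := noncomm_ring) w * he * w' + hww'
  · linear_combination (norm := noncomm_ring) - ((1 - e) * hw'w * (e * w')) + he * w'
  · linear_combination (norm := noncomm_ring) - (w * e * hw'w * (1 - e)) + w * he

/-- For an element with a unit inner inverse, the complementary idempotents
`1 - x*u` and `1 - u*x` are equivalent. -/
lemma ureg_compl_equiv (x u v : S) (huv : u * v = 1) (hvu : v * u = 1)
    (hx : x * u * x = x) : IdemEquiv (1 - x * u) (1 - u * x) := by
  have s1 : (v - x) * (1 - u * x) = v - x := by
    linear_combination (norm := noncomm_ring) - (hvu * x) + hx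
  have s2 : (v - x) * u = 1 - x * u := by
    linear_combination (norm := noncomm_ring) hvu
  have s3 : (1 - x * u) * (1 - x * u) = 1 - x * u := by
    linear_combination (norm := noncomm_ring) hx * u
  have t1 : (1 - x * u) * (v - x) = v - x := by
    linear_combination (norm := noncomm_ring) - (x * huv) + hx
  have t2 : u * (v - x) = 1 - u * x := by
    linear_combination (norm := noncomm_ring) huv
  have t3 : (1 - u * x) * (1 - u * x) = 1 - u * x := by
    linear_combination (norm := noncomm_ring) u * hx
  refine ⟨v - x, (1 - u * x) * u * (1 - x * u), ?_, ?_, ?_, ?_⟩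
  · linear_combination (norm := noncomm_ring) s1 * (u * (1 - x * u)) + s2 * (1 - x * u) + s3
  · linear_combination (norm := noncomm_ring) ((1 - u * x) * u) * t1 + (1 - u * x) * t2 + t3
  · linear_combination (norm := noncomm_ring) s1
  · linear_combination (norm := noncomm_ring) t3 * (u * (1 - x * u))

/-- Internal cancellation in unit-regular rings: equivalent idempotents have
equivalent complements. -/
lemma equiv_compl (h : ∀ a : S, ∃ u : Sˣ, a * ↑u * a = a) {p q : S}
    (hp : p * p = p) (hq : q * q = q) (hpq : IdemEquiv p q) :
    IdemEquiv (1 - p) (1 - q) := by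
  obtain ⟨x, y, h1, h2, h3, h4⟩ := hpq
  obtain ⟨u, hu⟩ := h x
  set U : S := ↑u with hU
  set V : S := ↑u⁻¹ with hV
  have hUV : U * V = 1 := u.mul_inv
  have hVU : V * U = 1 := u.inv_mul
  -- hu : x * U * x = x
  have hpx : p * x = x := by
    linear_combination (norm := noncomm_ring) - h1 * x + x * h2 + h3
  have hXX : x * U * (x * U) = x * U := by
    linear_combination (norm := noncomm_ring) hu * U
  have hpxU : p * (x * U) = x * U := by
    linear_combination (norm := noncomm_ring) hpx * U
  have hxUp : x * U * p = p := by
    linear_combination (norm := noncomm_ring) - (x * U * h1) + hu * y + h1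
  -- conjugating unit for x*U ↦ p
  have hw1 : (1 - p + x * U) * (1 + p - x * U) = 1 := by
    linear_combination (norm := noncomm_ring) - hp + hpxU + hxUp - hXX
  have hw2 : (1 + p - x * U) * (1 - p + x * U) = 1 := by
    linear_combination (norm := noncomm_ring) - hp + hpxU + hxUp - hXX
  have hconj1 : (1 - p + x * U) * (x * U) * (1 + p - x * U) = p := by
    linear_combination (norm := noncomm_ring) (- hpxU + hXX) * (1 + p - x*U) + hxUp - hXX
  have e1 : IdemEquiv (1 - x * U) (1 - p) := by
    have := conj_compl_equiv (x * U) (1 - p + x * U) (1 + p - x * U) hXX hw1 hw2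
    rwa [hconj1] at this
  -- the U*x side
  have hYY : U * x * (U * x) = U * x := by
    linear_combination (norm := noncomm_ring) U * hu
  have hqUx : q * (U * x) = q := by
    linear_combination (norm := noncomm_ring) - (h2 * (U * x)) + y * hu + h2
  have hUxq : U * x * q = U * x := by
    linear_combination (norm := noncomm_ring) U * h3
  have hw3 : (1 + q - U * x) * (1 - q + U * x) = 1 := by
    linear_combination (norm := noncomm_ring) - hq + hqUx + hUxq - hYY
  have hw4 : (1 - q + U * x) * (1 + q - U * x) = 1 := by
    linear_combination (norm := noncomm_ring) - hq + hqUx + hUxq - hYY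
  have c1 : (1 + q - U * x) * (U * x) = q := by
    linear_combination (norm := noncomm_ring) hqUx - hYY
  have c2 : q * (1 - q + U * x) = q := by
    linear_combination (norm := noncomm_ring) - hq + hqUx
  have hconj2 : (1 + q - U * x) * (U * x) * (1 - q + U * x) = q := by
    linear_combination (norm := noncomm_ring) c1 * (1 - q + U * x) + c2
  have e2 : IdemEquiv (1 - U * x) (1 - q) := by
    have := conj_compl_equiv (U * x) (1 + q - U * x) (1 - q + U * x) hYY hw3 hw4
    rwa [hconj2] at this
  have e3 : IdemEquiv (1 - x * U) (1 - U * x) := ureg_compl_equiv x U V hUV hVU hu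
  exact (e1.symm.trans e3).trans e2


/-- Corners of unit-regular rings are unit-regular (element-wise form). -/
lemma corner_ureg (h : ∀ a : S, ∃ u : Sˣ, a * ↑u * a = a) (e a : S)
    (he : e * e = e) (hea : e * a = a) (hae : a * e = a) :
    ∃ v v' : S, e * v = v ∧ v * e = v ∧ e * v' = v' ∧ v' * e = v' ∧
      v * v' = e ∧ v' * v = e ∧ a * v * a = a := by
  obtain ⟨u, hu⟩ := h a
  set U : S := ↑u with hUdef
  -- hu : a * U * a = a
  have k1 : a * (e * U * e) * a = a := by
    linear_combination (norm := noncomm_ring) hae * (U * (e * a)) + a * U * hea + hu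
  set r : S := e * U * e * a * (e * U * e) with hrdef
  have hara : a * r * a = a := by
    rw [hrdef]
    linear_combination (norm := noncomm_ring) k1 * (e * U * e * a) + k1
  have hrar : r * a * r = r := by
    rw [hrdef]
    linear_combination (norm := noncomm_ring)
      (e * U * e) * k1 * (e * U * e * a * (e * U * e)) + (e * U * e) * k1 * (e * U * e)
  have her : e * r = r := by
    rw [hrdef]
    linear_combination (norm := noncomm_ring) he * (U * (e * (a * (e * U * e))))
  have hre : r * e = r := by
    rw [hrdef]
    linear_combination (norm := noncomm_ring) (e * U * e * a * (e * U)) * he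
  have hg2 : (a * r) * (a * r) = a * r := by
    linear_combination (norm := noncomm_ring) hara * r
  have hh2 : (r * a) * (r * a) = r * a := by
    linear_combination (norm := noncomm_ring) hrar * a
  have heg : e * (a * r) = a * r := by
    linear_combination (norm := noncomm_ring) hea * r
  have hge : (a * r) * e = a * r := by
    linear_combination (norm := noncomm_ring) a * hre
  have heh : e * (r * a) = r * a := by
    linear_combination (norm := noncomm_ring) her * a
  have hhe : (r * a) * e = r * a := by
    linear_combination (norm := noncomm_ring) r * hae
  have hp : (a * r + 1 - e) * (a * r + 1 - e) = a * r + 1 - e := by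
    linear_combination (norm := noncomm_ring) hg2 - hge - heg + he
  have hq : (r * a + 1 - e) * (r * a + 1 - e) = r * a + 1 - e := by
    linear_combination (norm := noncomm_ring) hh2 - hhe - heh + he
  have hpq : IdemEquiv (a * r + 1 - e) (r * a + 1 - e) := by
    refine ⟨a + 1 - e, r + 1 - e, ?_, ?_, ?_, ?_⟩
    · linear_combination (norm := noncomm_ring) - hae - her + he
    · linear_combination (norm := noncomm_ring) - hre - hea + he
    · linear_combination (norm := noncomm_ring) hara - hae - heh + he
    · linear_combination (norm := noncomm_ring) hrar - hhe - her + he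
  have hcompl := equiv_compl h hp hq hpq
  have hrw1 : (1 : S) - (a * r + 1 - e) = e - a * r := by noncomm_ring
  have hrw2 : (1 : S) - (r * a + 1 - e) = e - r * a := by noncomm_ring
  rw [hrw1, hrw2] at hcompl
  obtain ⟨s, t, hst, hts, hsq, hqt⟩ := hcompl
  have hgs : (e - a * r) * s = s := by
    linear_combination (norm := noncomm_ring) - (hst * s) + s * hts + hsq
  have htg : t * (e - a * r) = t := by
    linear_combination (norm := noncomm_ring) - (t * hst) + hts * t + hqt
  have het : e * t = t := by
    linear_combination (norm := noncomm_ring) - (e * hqt) + he * t - her * (a * t) + hqt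
  have hte : t * e = t := by
    linear_combination (norm := noncomm_ring) - (htg * e) + t * he - t * a * hre + htg
  have hes : e * s = s := by
    linear_combination (norm := noncomm_ring) - (e * hgs) + he * s - hea * (r * s) + hgs
  have hse : s * e = s := by
    linear_combination (norm := noncomm_ring) - (hsq * e) + s * he - s * r * hae + hsq
  have hrs : r * s = 0 := by
    linear_combination (norm := noncomm_ring) - (r * hgs) + hre * s - hrar * s
  have hta : t * a = 0 := by
    linear_combination (norm := noncomm_ring) - (htg * a) + t * hea - t * hara
  have hat : a * t = 0 := by
    linear_combination (norm := noncomm_ring) - (a * hqt) + hae * t - hara * t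
  have hsr : s * r = 0 := by
    linear_combination (norm := noncomm_ring) - (hsq * r) + s * her - s * hrar
  refine ⟨r + t, a + s, ?_, ?_, ?_, ?_, ?_, ?_, ?_⟩
  · linear_combination (norm := noncomm_ring) her + het
  · linear_combination (norm := noncomm_ring) hre + hte
  · linear_combination (norm := noncomm_ring) hea + hes
  · linear_combination (norm := noncomm_ring) hae + hse
  · linear_combination (norm := noncomm_ring) hrs + hta + hts
  · linear_combination (norm := noncomm_ring) hat + hsr + hst
  · linear_combination (norm := noncomm_ring) hara + hat * a


lemma sandwich (n n' m m' z y : T) (hn : n' * n = 1) (hm : m * m' = 1)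
    (hzy : n * z * m = y) : z = n' * y * m' := by
  rw [← hzy]
  linear_combination (norm := noncomm_ring) - (hn * (z * (m * m'))) - z * hm

lemma factor_aux (E P : T) (hE : E * E = E) (hEPE : E * P * E = E) :
    (1 + (1 - E) * P * E) *
      (E + ((1 - E) * P * (1 - E) - (1 - E) * P * E * (E * P * (1 - E)))) *
      (1 + E * P * (1 - E)) = P := by
  have hAE : (1 - E) * P * E * E = (1 - E) * P * E := by
    linear_combination (norm := noncomm_ring) ((1 - E) * P) * hE
  have hEB : E * (E * P * (1 - E)) = E * P * (1 - E) := by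
    linear_combination (norm := noncomm_ring) hE * (P * (1 - E))
  have hAA : (1 - E) * P * E * ((1 - E) * P * E) = 0 := by
    linear_combination (norm := noncomm_ring) - ((1 - E) * P * hE * (P * E))
  have hBB : E * P * (1 - E) * (E * P * (1 - E)) = 0 := by
    linear_combination (norm := noncomm_ring) - (E * P * hE * (P * (1 - E)))
  have hAD0 : (1 - E) * P * E * ((1 - E) * P * (1 - E)) = 0 := by
    linear_combination (norm := noncomm_ring) - ((1 - E) * P * hE * (P * (1 - E)))
  have hD0B : (1 - E) * P * (1 - E) * (E * P * (1 - E)) = 0 := by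
    linear_combination (norm := noncomm_ring) - ((1 - E) * P * hE * (P * (1 - E)))
  have hAD : (1 - E) * P * E *
      ((1 - E) * P * (1 - E) - (1 - E) * P * E * (E * P * (1 - E))) = 0 := by
    linear_combination (norm := noncomm_ring) hAD0 - hAA * (E * P * (1 - E))
  have hDB : ((1 - E) * P * (1 - E) - (1 - E) * P * E * (E * P * (1 - E))) *
      (E * P * (1 - E)) = 0 := by
    linear_combination (norm := noncomm_ring) hD0B - (1 - E) * P * E * hBB
  have hsum : E + (1 - E) * P * E + E * P * (1 - E) + (1 - E) * P * (1 - E) = P := by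
    linear_combination (norm := noncomm_ring) - hEPE
  set_option maxHeartbeats 1000000 in
  linear_combination (norm := noncomm_ring) hEB + hDB + hAE + hAD +
    hAE * (E * P * (1 - E)) + hAD * (E * P * (1 - E)) + hsum

/-- Corner units lift along a surjection out of a unit-regular ring. -/
lemma corner_unit_lift (f : S →+* T) (hf : Function.Surjective f)
    (h : ∀ a : S, ∃ u : Sˣ, a * ↑u * a = a) (e : S) (he : e * e = e)
    (z z' : T) (h1 : (1 - f e) * z = z) (h2 : z * (1 - f e) = z)
    (h3 : (1 - f e) * z' = z') (h4 : z' * (1 - f e) = z')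
    (h5 : z * z' = 1 - f e) (h6 : z' * z = 1 - f e) :
    ∃ D D' : S, (1 - e) * D = D ∧ D * (1 - e) = D ∧ (1 - e) * D' = D' ∧
      D' * (1 - e) = D' ∧ D * D' = 1 - e ∧ D' * D = 1 - e ∧ f D = z := by
  obtain ⟨s₀, hs₀⟩ := hf z
  have he' : ((1 : S) - e) * (1 - e) = (1 - e) := by
    linear_combination (norm := noncomm_ring) he
  have hes : ((1 : S) - e) * ((1 - e) * s₀ * (1 - e)) = (1 - e) * s₀ * (1 - e) := by
    linear_combination (norm := noncomm_ring) he' * (s₀ * (1 - e))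
  have hse : ((1 : S) - e) * s₀ * (1 - e) * (1 - e) = (1 - e) * s₀ * (1 - e) := by
    linear_combination (norm := noncomm_ring) ((1 - e) * s₀) * he'
  have hfs : f ((1 - e) * s₀ * (1 - e)) = z := by
    rw [map_mul, map_mul, map_sub, map_one, hs₀]
    linear_combination (norm := noncomm_ring) h1 + (1 - f e) * h2
  obtain ⟨v, v', hev, hve, hev', hv'e, hvv', hv'v, hsvs⟩ :=
    corner_ureg h (1 - e) ((1 - e) * s₀ * (1 - e)) he' hes hse
  have hc1 : (1 - f e) * f v = f v := by
    have := congrArg f hev; rwa [map_mul, map_sub, map_one] at this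
  have hc2 : f v * (1 - f e) = f v := by
    have := congrArg f hve; rwa [map_mul, map_sub, map_one] at this
  have key : z * f v * z = z := by
    have := congrArg f hsvs
    rwa [map_mul, map_mul, hfs] at this
  have st1 : z' * (z * f v * z) * z' = f v := by
    linear_combination (norm := noncomm_ring) h6 * (f v * (z * z')) + hc1 * (z * z') +
      f v * h5 + hc2
  have st2 : z' * z * z' = z' := by
    linear_combination (norm := noncomm_ring) h6 * z' + h3
  rw [key] at st1
  have hfv : f v = z' := by rw [← st1]; exact st2
  have hfv'c : (1 - f e) * f v' = f v' := by
    have := congrArg f hev'; rwa [map_mul, map_sub, map_one] at this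
  have hx : f v * f v' = 1 - f e := by
    have := congrArg f hvv'; rwa [map_mul, map_sub, map_one] at this
  rw [hfv] at hx
  have hfv' : f v' = z := by
    linear_combination (norm := noncomm_ring) - hfv'c - h5 * (f v') + z * hx + h2
  exact ⟨v', v, hev', hv'e, hev, hve, hv'v, hvv', hfv'⟩


/-- Unit inner inverses of unit-regular elements lift along surjections out of
unit-regular rings. -/
lemma ureg_lift (f : S →+* T) (hf : Function.Surjective f)
    (hS : ∀ a : S, ∃ u : Sˣ, a * ↑u * a = a) (a : S) (v : Tˣ)
    (hv : f a * ↑v * f a = f a) :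
    ∃ u : Sˣ, f ↑u = ↑v ∧ a * ↑u * a = a := by
  obtain ⟨w, hw⟩ := hS a
  have hww' : (↑w : S) * ↑w⁻¹ = 1 := w.mul_inv
  have he : (a * ↑w) * (a * ↑w) = a * ↑w := by
    linear_combination (norm := noncomm_ring) hw * (↑w : S)
  have haw : (a * ↑w) * ↑w⁻¹ = a := by
    linear_combination (norm := noncomm_ring) a * hww'
  set e : S := a * ↑w with hedef
  -- hw : e * a = a  (folded)
  set E : T := f e with hEdef
  have hE : E * E = E := by rw [hEdef, ← map_mul, he]
  have hEfa : E = f a * f ↑w := by rw [hEdef, hedef, map_mul]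
  have hfw : f (↑w : S) * f ↑w⁻¹ = 1 := by rw [← map_mul, Units.mul_inv, map_one]
  have hwf : f (↑w⁻¹ : S) * f ↑w = 1 := by rw [← map_mul, Units.inv_mul, map_one]
  have hvv' : (↑v : T) * ↑v⁻¹ = 1 := v.mul_inv
  have hv'v : (↑v⁻¹ : T) * ↑v = 1 := v.inv_mul
  set P : T := f ↑w⁻¹ * ↑v with hPdef
  set P' : T := ↑v⁻¹ * f ↑w with hP'def
  have hEPE : E * P * E = E := by
    rw [hEfa, hPdef]
    linear_combination (norm := noncomm_ring)
      (f a) * hfw * (↑v * (f a * f ↑w)) + hv * (f ↑w)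
  have hPP' : P * P' = 1 := by
    rw [hPdef, hP'def]
    linear_combination (norm := noncomm_ring) f ↑w⁻¹ * hvv' * f ↑w + hwf
  have hP'P : P' * P = 1 := by
    rw [hPdef, hP'def]
    linear_combination (norm := noncomm_ring) ↑v⁻¹ * hfw * ↑v + hv'v
  have hfact := factor_aux E P hE hEPE
  set α : T := (1 - E) * P * E with hαdef
  set β : T := E * P * (1 - E) with hβdef
  set δ : T := (1 - E) * P * (1 - E) - α * β with hδdef
  -- hfact : (1 + α) * (E + δ) * (1 + β) = P
  have hαα : α * α = 0 := by
    rw [hαdef]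
    linear_combination (norm := noncomm_ring) - ((1 - E) * P * hE * (P * E))
  have hββ : β * β = 0 := by
    rw [hβdef]
    linear_combination (norm := noncomm_ring) - (E * P * hE * (P * (1 - E)))
  have hEδ : E * δ = 0 := by
    rw [hδdef, hαdef, hβdef]
    linear_combination (norm := noncomm_ring) - (hE * (P * (1 - E))) +
      hE * (P * (E * (E * P * (1 - E))))
  have hδE : δ * E = 0 := by
    rw [hδdef, hαdef, hβdef]
    linear_combination (norm := noncomm_ring) - ((1 - E) * P * hE) +
      (1 - E) * P * E * (E * P * hE)
  have hEδeq : E + δ = (1 - α) * P * (1 - β) := by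
    refine sandwich (1 + α) (1 - α) (1 + β) (1 - β) _ _ ?_ ?_ hfact
    · linear_combination (norm := noncomm_ring) - hαα
    · linear_combination (norm := noncomm_ring) - hββ
  have hZ1 : (E + δ) * ((1 + β) * P' * (1 + α)) = 1 := by
    rw [hEδeq]
    linear_combination (norm := noncomm_ring) - ((1 - α) * P * hββ * (P' * (1 + α))) +
      (1 - α) * hPP' * (1 + α) - hαα
  have hZ2 : ((1 + β) * P' * (1 + α)) * (E + δ) = 1 := by
    rw [hEδeq]
    linear_combination (norm := noncomm_ring) - ((1 + β) * P' * hαα * (P * (1 - β))) +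
      (1 + β) * hP'P * (1 - β) - hββ
  set Z : Tˣ := ⟨E + δ, (1 + β) * P' * (1 + α), hZ1, hZ2⟩ with hZdef
  have hZval : (↑Z : T) = E + δ := rfl
  have hZZi : (↑Z : T) * ↑Z⁻¹ = 1 := Z.mul_inv
  have hZiZ : (↑Z⁻¹ : T) * ↑Z = 1 := Z.inv_mul
  have hEZ : E * ↑Z = E := by
    rw [hZval]
    linear_combination (norm := noncomm_ring) hE + hEδ
  have hZE : (↑Z : T) * E = E := by
    rw [hZval]
    linear_combination (norm := noncomm_ring) hE + hδE
  have hEZi : E * ↑Z⁻¹ = E := by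
    linear_combination (norm := noncomm_ring) - (hEZ * ↑Z⁻¹) + E * hZZi
  have hZiE : (↑Z⁻¹ : T) * E = E := by
    linear_combination (norm := noncomm_ring) - (↑Z⁻¹ * hZE) + hZiZ * E
  have s1 : δ * ↑Z⁻¹ = 1 - E := by
    linear_combination (norm := noncomm_ring) - (hZval * ↑Z⁻¹) + hZZi - hEZi
  have s2 : (↑Z⁻¹ : T) * δ = 1 - E := by
    linear_combination (norm := noncomm_ring) - (↑Z⁻¹ * hZval) + hZiZ - hZiE
  have hδc1 : (1 - E) * δ = δ := by
    linear_combination (norm := noncomm_ring) - hEδ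
  have hδc2 : δ * (1 - E) = δ := by
    linear_combination (norm := noncomm_ring) - hδE
  have hδ'c1 : (1 - E) * ((1 - E) * ↑Z⁻¹ * (1 - E)) = (1 - E) * ↑Z⁻¹ * (1 - E) := by
    linear_combination (norm := noncomm_ring) hE * (↑Z⁻¹ * (1 - E))
  have hδ'c2 : (1 - E) * ↑Z⁻¹ * (1 - E) * (1 - E) = (1 - E) * ↑Z⁻¹ * (1 - E) := by
    linear_combination (norm := noncomm_ring) ((1 - E) * ↑Z⁻¹) * hE
  have hδδ' : δ * ((1 - E) * ↑Z⁻¹ * (1 - E)) = 1 - E := by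
    linear_combination (norm := noncomm_ring) - (hδE * (↑Z⁻¹ * (1 - E))) + s1 * (1 - E) + hE
  have hδ'δ : (1 - E) * ↑Z⁻¹ * (1 - E) * δ = 1 - E := by
    linear_combination (norm := noncomm_ring) - ((1 - E) * ↑Z⁻¹ * hEδ) + (1 - E) * s2 + hE
  rw [hEdef] at hδc1 hδc2 hδ'c1 hδ'c2 hδδ' hδ'δ
  obtain ⟨D, D', hD1, hD2, hD'1, hD'2, hDD', hD'D, hfD⟩ :=
    corner_unit_lift f hf hS e he δ ((1 - E) * ↑Z⁻¹ * (1 - E))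
      hδc1 hδc2 hδ'c1 hδ'c2 hδδ' hδ'δ
  obtain ⟨x, hx⟩ := hf P
  have hAA : ((1 - e) * x * e) * ((1 - e) * x * e) = 0 := by
    linear_combination (norm := noncomm_ring) - ((1 - e) * x * he * (x * e))
  have hBB : (e * x * (1 - e)) * (e * x * (1 - e)) = 0 := by
    linear_combination (norm := noncomm_ring) - (e * x * he * (x * (1 - e)))
  have hfA : f ((1 - e) * x * e) = α := by
    rw [map_mul, map_mul, map_sub, map_one, hx, hαdef, hEdef]
  have hfB : f (e * x * (1 - e)) = β := by
    rw [map_mul, map_mul, map_sub, map_one, hx, hβdef, hEdef]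
  have hfeD : f (e + D) = E + δ := by rw [map_add, hfD, hEdef]
  have heD' : e * D' = 0 := by
    linear_combination (norm := noncomm_ring) - (e * hD'1) - he * D'
  have hDe : D * e = 0 := by
    linear_combination (norm := noncomm_ring) - (hD2 * e) - D * he
  have heD : e * D = 0 := by
    linear_combination (norm := noncomm_ring) - (e * hD1) - he * D
  have hD'e : D' * e = 0 := by
    linear_combination (norm := noncomm_ring) - (hD'2 * e) - D' * he
  set uA : Sˣ := ⟨1 + (1 - e) * x * e, 1 - (1 - e) * x * e,
    by linear_combination (norm := noncomm_ring) - hAA,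
    by linear_combination (norm := noncomm_ring) - hAA⟩ with huA
  set uB : Sˣ := ⟨1 + e * x * (1 - e), 1 - e * x * (1 - e),
    by linear_combination (norm := noncomm_ring) - hBB,
    by linear_combination (norm := noncomm_ring) - hBB⟩ with huB
  set uED : Sˣ := ⟨e + D, e + D',
    by linear_combination (norm := noncomm_ring) he + heD' + hDe + hDD',
    by linear_combination (norm := noncomm_ring) he + heD + hD'e + hD'D⟩ with huED
  set Q : Sˣ := uA * uED * uB with hQdef
  have hQv : (↑Q : S) = (1 + (1 - e) * x * e) * (e + D) * (1 + e * x * (1 - e)) := rfl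
  have hfQ : f ↑Q = P := by
    rw [hQv, map_mul, map_mul, hfeD, map_add, map_add, map_one, hfA, hfB]
    exact hfact
  have heA : e * ((1 - e) * x * e) = 0 := by
    linear_combination (norm := noncomm_ring) - (he * (x * e))
  have hBe : (e * x * (1 - e)) * e = 0 := by
    linear_combination (norm := noncomm_ring) - (e * x * he)
  have hQe : e * ↑Q * e = e := by
    rw [hQv]
    linear_combination (norm := noncomm_ring)
      heA * ((e + D) * (1 + e * x * (1 - e)) * e) +
      heD * ((1 + e * x * (1 - e)) * e) + he * ((1 + e * x * (1 - e)) * e) +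
      e * hBe + he
  refine ⟨w * Q, ?_, ?_⟩
  · rw [Units.val_mul, map_mul, hfQ, hPdef]
    linear_combination (norm := noncomm_ring) hfw * (↑v : T)
  · rw [Units.val_mul]
    linear_combination (norm := noncomm_ring) - (hedef * (↑Q * a)) - e * ↑Q * haw +
      hQe * ↑w⁻¹ + haw

end Aux


/-- The inverse limit of an inverse system of rings `(Rᵢ, fᵢ)` indexed by `ℕ`, realized as
the subring of compatible sequences in the product. -/
def ringInverseLimit (R : ℕ → Type*) [∀ i, Ring (R i)]
    (f : ∀ i, R (i + 1) →+* R i) : Subring (∀ i, R i) where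
  carrier := {x | ∀ i, f i (x (i + 1)) = x i}
  zero_mem' := by intro i; simp
  one_mem' := by intro i; simp
  add_mem' := by intro x y hx hy i; simp [map_add, hx i, hy i]
  mul_mem' := by intro x y hx hy i; simp [map_mul, hx i, hy i]
  neg_mem' := by intro x hx i; simp [map_neg, hx i]

/-- An inverse limit of unit-regular rings along surjective connecting
homomorphisms is unit-regular. -/
theorem stmt_6 (R : ℕ → Type*) [∀ i, Ring (R i)] (f : ∀ i, R (i + 1) →+* R i)
    (hsurj : ∀ i, Function.Surjective (f i))
    (hureg : ∀ i, ∀ a : R i, ∃ u : (R i)ˣ, a * u * a = a) :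
    ∀ a : ringInverseLimit R f, ∃ u : (ringInverseLimit R f)ˣ, a * u * a = a := by
  intro a
  have ha : ∀ i, f i (a.1 (i + 1)) = a.1 i := a.2
  have key : ∀ i (v : (R i)ˣ), a.1 i * ↑v * a.1 i = a.1 i →
      ∃ u : (R (i + 1))ˣ, (f i) ↑u = ↑v ∧
        a.1 (i + 1) * ↑u * a.1 (i + 1) = a.1 (i + 1) := by
    intro i v hv
    exact ureg_lift (f i) (hsurj i) (hureg (i + 1)) (a.1 (i + 1)) v
      (by rw [ha i]; exact hv)
  let C : ℕ → Type _ := fun i => {u : (R i)ˣ // a.1 i * ↑u * a.1 i = a.1 i}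
  let c0 : C 0 := ⟨(hureg 0 (a.1 0)).choose, (hureg 0 (a.1 0)).choose_spec⟩
  let step : ∀ i, C i → C (i + 1) := fun i c =>
    ⟨(key i c.1 c.2).choose, (key i c.1 c.2).choose_spec.2⟩
  let g : ∀ i, C i := fun i => Nat.rec (motive := C) c0 step i
  have hlink : ∀ i, (f i) ↑((g (i + 1)).1) = ↑((g i).1) := fun i =>
    (key i (g i).1 (g i).2).choose_spec.1
  have hinv : ∀ i, (f i) ↑(((g (i + 1)).1)⁻¹) = ↑(((g i).1)⁻¹) := by
    intro i
    have h0 : Units.map (f i : R (i + 1) →* R i) ((g (i + 1)).1) = (g i).1 :=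
      Units.ext (hlink i)
    calc (f i) ↑((g (i + 1)).1)⁻¹
        = ↑((Units.map (f i : R (i + 1) →* R i) ((g (i + 1)).1))⁻¹) :=
          (Units.coe_map_inv _ _).symm
      _ = ↑((g i).1)⁻¹ := by rw [h0]
  have humem : (fun i => (↑((g i).1) : R i)) ∈ ringInverseLimit R f := hlink
  have hvmem : (fun i => (↑(((g i).1)⁻¹) : R i)) ∈ ringInverseLimit R f := hinv
  refine ⟨⟨⟨_, humem⟩, ⟨_, hvmem⟩, ?_, ?_⟩, ?_⟩
  · exact Subtype.ext (funext fun i => Units.mul_inv _)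
  · exact Subtype.ext (funext fun i => Units.inv_mul _)
  · exact Subtype.ext (funext fun i => (g i).2)
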